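/- arXiv:2108.09623 — 3 statements merged into one kernel-verified Lean document; each statement's English description precedes it below -/
import Mathlib

section
/- Let u, φ: ℝⁿ → ℝ with 0 ≤ φ ≤ 1, k ∈ ℝ, and set w₊ = (u − k)₊. Let ℓ > 1 and Φ_ℓ(τ) = |τ|^{ℓ−2}τ. Then for all x, y with u(x) ≥ u(y): Φ_ℓ(u(x) − u(y))·(w₊(x)φ(x)^q − w₊(y)φ(y)^q) ≥ Φ_ℓ(w₊(x) − w₊(y))·(w₊(x)φ(x)^q − w₊(y)φ(y)^q), where q ≥ ℓ. -/
open Real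

theorem stmt_9 (n : ℕ) (ℓ q k : ℝ) (hℓ : 1 < ℓ) (hq : ℓ ≤ q)
    (u φ : EuclideanSpace ℝ (Fin n) → ℝ) (hφ0 : ∀ x, 0 ≤ φ x) (hφ1 : ∀ x, φ x ≤ 1)
    (x y : EuclideanSpace ℝ (Fin n)) (hxy : u y ≤ u x) :
    (fun τ : ℝ => |τ| ^ (ℓ - 2) * τ) (u x - u y) *
        (max (u x - k) 0 * φ x ^ q - max (u y - k) 0 * φ y ^ q)
      ≥ (fun τ : ℝ => |τ| ^ (ℓ - 2) * τ) (max (u x - k) 0 - max (u y - k) 0) *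
        (max (u x - k) 0 * φ x ^ q - max (u y - k) 0 * φ y ^ q) := by
  simp only
  rcases le_or_gt k (u y) with hky | hky
  · -- u y ≥ k : both truncations are affine, equality
    rw [max_eq_left (by linarith), max_eq_left (by linarith)]
    have : u x - k - (u y - k) = u x - u y := by ring
    rw [this]
  · rcases le_or_gt (u x) k with hxk | hxk
    · -- u x ≤ k : everything vanishes
      rw [max_eq_right (by linarith), max_eq_right (by linarith)]
      simp
    · -- u y < k < u x
      rw [max_eq_right (by linarith : u y - k ≤ 0), max_eq_left (by linarith : (0:ℝ) ≤ u x - k)]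
      have hd : (0:ℝ) < u x - k := by linarith
      have ha : (0:ℝ) < u x - u y := by linarith
      have hda : u x - k ≤ u x - u y := by linarith
      have h1 : |u x - u y| ^ (ℓ - 2) * (u x - u y) = (u x - u y) ^ (ℓ - 1) := by
        rw [abs_of_pos ha, ← Real.rpow_add_one (ne_of_gt ha)]
        ring_nf
      have h2 : |u x - k - 0| ^ (ℓ - 2) * (u x - k - 0) = (u x - k) ^ (ℓ - 1) := by
        rw [sub_zero, abs_of_pos hd, ← Real.rpow_add_one (ne_of_gt hd)]
        ring_nf
      rw [h1, h2]
      have hΦ : (u x - k) ^ (ℓ - 1) ≤ (u x - u y) ^ (ℓ - 1) :=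
        Real.rpow_le_rpow hd.le hda (by linarith)
      have hS : 0 ≤ (u x - k) * φ x ^ q - 0 * φ y ^ q := by
        rw [zero_mul, sub_zero]
        exact mul_nonneg hd.le (Real.rpow_nonneg (hφ0 x) q)
      exact mul_le_mul_of_nonneg_right hΦ hS
end

section
/- Let ℓ > 1, q ≥ ℓ, and let w, φ: ℝⁿ → [0,∞) with 0 ≤ φ ≤ 1. Then there is a constant c > 0 depending only on ℓ and q such that for all x, y ∈ ℝⁿ, Φ_ℓ(w(x) − w(y))·(w(x)φ(x)^q − w(y)φ(y)^q) ≥ |w(x) − w(y)|^ℓ·(φ(x)^q + φ(y)^q)/4 − c·|φ(x) − φ(y)|^ℓ·(w(x) + w(y))^ℓ, where Φ_ℓ(τ) = |τ|^{ℓ−2}τ. -/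
open Real

lemma bern_aux (s t q : ℝ) (ht : 0 ≤ t) (hts : t ≤ s) (hq : 1 ≤ q) :
    s ^ q - t ^ q ≤ q * s ^ (q - 1) * (s - t) := by
  rcases eq_or_lt_of_le (ht.trans hts) with h | hs
  · have ht0 : t = 0 := le_antisymm (hts.trans h.symm.le) ht
    simp [← h, ht0]
  · have hr : (-1 : ℝ) ≤ t / s - 1 := by
      have : 0 ≤ t / s := div_nonneg ht hs.le
      linarith
    have hb := one_add_mul_self_le_rpow_one_add hr hq
    rw [add_sub_cancel] at hb
    have h1 : (t / s) ^ q * s ^ q = t ^ q := by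
      rw [← Real.mul_rpow (div_nonneg ht hs.le) hs.le, div_mul_cancel₀]
      exact hs.ne'
    have h2 : s ^ (q - 1) * s = s ^ q := by
      rw [← Real.rpow_add_one hs.ne' (q - 1)]
      ring_nf
    have h3 : s ^ (q - 1) * t ≤ s ^ q * (t / s) := by
      rw [mul_div_assoc']
      rw [le_div_iff₀ hs]
      nlinarith [Real.rpow_nonneg hs.le (q - 1)]
    have hsq : (0:ℝ) ≤ s ^ q := Real.rpow_nonneg hs.le q
    nlinarith [mul_le_mul_of_nonneg_right hb hsq]

lemma young4 (ℓ A B : ℝ) (hℓ : 1 < ℓ) (hA : 0 ≤ A) (hB : 0 ≤ B) :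
    A * B ≤ A ^ (ℓ / (ℓ - 1)) / 4 + (4 * B) ^ ℓ := by
  have hℓ1 : (0:ℝ) < ℓ - 1 := by linarith
  have hp : 1 < ℓ / (ℓ - 1) := by
    rw [lt_div_iff₀ hℓ1]; linarith
  have hconj : (ℓ / (ℓ - 1)).HolderConjugate ℓ := by
    rw [Real.holderConjugate_iff_eq_conjExponent hp]
    have h5 : ℓ / (ℓ - 1) - 1 = 1 / (ℓ - 1) := by field_simp; ring
    rw [h5, div_div_eq_mul_div, div_one, div_mul_cancel₀ _ hℓ1.ne']
  have hy := Real.young_inequality_of_nonneg (a := A / 4) (b := 4 * B)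
    (div_nonneg hA (by norm_num)) (by positivity) hconj
  have e : (A / 4) ^ (ℓ / (ℓ - 1)) = A ^ (ℓ / (ℓ - 1)) / 4 ^ (ℓ / (ℓ - 1)) :=
    Real.div_rpow hA (by norm_num) _
  have h4 : (4:ℝ) ≤ 4 ^ (ℓ / (ℓ - 1)) := by
    calc (4:ℝ) = 4 ^ (1:ℝ) := by norm_num
    _ ≤ 4 ^ (ℓ / (ℓ - 1)) := Real.rpow_le_rpow_of_exponent_le (by norm_num) hp.le
  have hApos : 0 ≤ A ^ (ℓ / (ℓ - 1)) := Real.rpow_nonneg hA _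
  have hBpos : 0 ≤ (4 * B) ^ ℓ := Real.rpow_nonneg (by positivity) _
  have t1 : (A / 4) ^ (ℓ / (ℓ - 1)) / (ℓ / (ℓ - 1)) ≤ A ^ (ℓ / (ℓ - 1)) / 4 := by
    rw [e, div_div]
    exact div_le_div_of_nonneg_left hApos (by norm_num) (by nlinarith)
  have t2 : (4 * B) ^ ℓ / ℓ ≤ (4 * B) ^ ℓ := div_le_self hBpos (by linarith)
  have hr : A * B = A / 4 * (4 * B) := by ring
  rw [hr]
  linarith

set_option maxHeartbeats 1600000 in
lemma key' (ℓ q a b s t : ℝ) (hℓ : 1 < ℓ) (hq : ℓ ≤ q) (ha : 0 ≤ a) (hb : 0 ≤ b)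
    (ht0 : 0 ≤ t) (hts : t ≤ s) (hs1 : s ≤ 1) :
    |a - b| ^ (ℓ - 2) * (a - b) * (a * s ^ q - b * t ^ q)
      ≥ |a - b| ^ ℓ * (s ^ q + t ^ q) / 4 - (2 * q) ^ ℓ * |s - t| ^ ℓ * (a + b) ^ ℓ := by
  have hq1 : 1 ≤ q := le_trans hℓ.le hq
  have hℓ1 : (0:ℝ) < ℓ - 1 := by linarith
  have hcpos : (0:ℝ) < 2 * q := by linarith
  have hcnn : 0 ≤ (2*q:ℝ) ^ ℓ := Real.rpow_nonneg hcpos.le ℓ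
  have hd : 0 ≤ |s - t| ^ ℓ := Real.rpow_nonneg (abs_nonneg _) ℓ
  have hM : 0 ≤ (a + b) ^ ℓ := Real.rpow_nonneg (by linarith) ℓ
  rcases eq_or_ne a b with rfl | hab
  · have e0 : |a - a| ^ ℓ = 0 := by
      rw [sub_self, abs_zero, Real.zero_rpow (by linarith : ℓ ≠ 0)]
    rw [ge_iff_le, e0, sub_self]
    have := mul_nonneg (mul_nonneg hcnn hd) hM
    nlinarith
  have hu : 0 < |a - b| := abs_pos.2 (sub_ne_zero.2 hab)
  rcases eq_or_lt_of_le (ht0.trans hts) with hs0 | hs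
  · have hs' : s = 0 := hs0.symm
    have ht' : t = 0 := le_antisymm (hs' ▸ hts) ht0
    subst hs'; subst ht'
    simp only [Real.zero_rpow (by linarith : q ≠ 0), sub_self, abs_zero,
      Real.zero_rpow (by linarith : ℓ ≠ 0), mul_zero, zero_mul]
    nlinarith [Real.rpow_nonneg (abs_nonneg (a - b)) ℓ]
  -- main case: a ≠ b, 0 < s
  have hS : (0:ℝ) ≤ s ^ q := Real.rpow_nonneg hs.le q
  have hT : (0:ℝ) ≤ t ^ q := Real.rpow_nonneg ht0 q
  have hTS : t ^ q ≤ s ^ q := Real.rpow_le_rpow ht0 hts (by linarith)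
  have habs_st : |s - t| = s - t := abs_of_nonneg (by linarith)
  have hu1 : |a - b| ^ (ℓ - 2) * |a - b| = |a - b| ^ (ℓ - 1) := by
    rw [← Real.rpow_add_one hu.ne' (ℓ - 2)]
    congr 1
    ring
  have hu2 : |a - b| ^ (ℓ - 2) * (a - b) ^ 2 = |a - b| ^ ℓ := by
    calc |a - b| ^ (ℓ - 2) * (a - b) ^ 2 = |a - b| ^ (ℓ - 2) * |a - b| * |a - b| := by
          rw [← sq_abs (a - b)]; ring
      _ = |a - b| ^ (ℓ - 1) * |a - b| := by rw [hu1]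
      _ = |a - b| ^ ℓ := by rw [← Real.rpow_add_one hu.ne' (ℓ - 1)]; congr 1; ring
  have hXlow : -(|a - b| ^ (ℓ - 1)) ≤ |a - b| ^ (ℓ - 2) * (a - b) := by
    have h := mul_le_mul_of_nonneg_left (neg_abs_le (a - b))
      (Real.rpow_nonneg (abs_nonneg (a - b)) (ℓ - 2))
    calc -(|a - b| ^ (ℓ - 1)) = |a - b| ^ (ℓ - 2) * (-|a - b|) := by rw [← hu1]; ring
      _ ≤ |a - b| ^ (ℓ - 2) * (a - b) := h
  have hbern : s ^ q - t ^ q ≤ q * s ^ (q - 1) * (s - t) := bern_aux s t q ht0 hts hq1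
  have hApow : (|a - b| ^ (ℓ - 1) * s ^ (q - 1)) ^ (ℓ / (ℓ - 1)) ≤ |a - b| ^ ℓ * s ^ q := by
    rw [Real.mul_rpow (Real.rpow_nonneg (abs_nonneg _) _) (Real.rpow_nonneg hs.le _)]
    have e1 : (|a - b| ^ (ℓ - 1)) ^ (ℓ / (ℓ - 1)) = |a - b| ^ ℓ := by
      rw [← Real.rpow_mul (abs_nonneg _)]
      congr 1
      field_simp
    have e2 : (s ^ (q - 1)) ^ (ℓ / (ℓ - 1)) ≤ s ^ q := by
      rw [← Real.rpow_mul hs.le]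
      apply Real.rpow_le_rpow_of_exponent_ge hs hs1
      rw [mul_div_assoc', le_div_iff₀ hℓ1]
      nlinarith
    rw [e1]
    exact mul_le_mul_of_nonneg_left e2 (Real.rpow_nonneg (abs_nonneg _) ℓ)
  have hBpow : (4 * (q / 2 * ((a + b) * (s - t)))) ^ ℓ = (2*q) ^ ℓ * (s - t) ^ ℓ * (a + b) ^ ℓ := by
    rw [show 4 * (q / 2 * ((a + b) * (s - t))) = 2 * q * ((a + b) * (s - t)) by ring]
    rw [Real.mul_rpow hcpos.le (mul_nonneg (show (0:ℝ) ≤ a + b by linarith)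
        (show (0:ℝ) ≤ s - t by linarith)),
      Real.mul_rpow (show (0:ℝ) ≤ a + b by linarith) (show (0:ℝ) ≤ s - t by linarith)]
    ring
  have hyoung := young4 ℓ (|a - b| ^ (ℓ - 1) * s ^ (q - 1)) (q / 2 * ((a + b) * (s - t))) hℓ
    (mul_nonneg (Real.rpow_nonneg (abs_nonneg _) _) (Real.rpow_nonneg hs.le _))
    (mul_nonneg (by linarith : (0:ℝ) ≤ q / 2)
      (mul_nonneg (by linarith : (0:ℝ) ≤ a + b) (by linarith : (0:ℝ) ≤ s - t)))
  have hkey : |a - b| ^ (ℓ - 1) * ((a + b) * (s ^ q - t ^ q)) / 2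
      ≤ |a - b| ^ ℓ * (s ^ q + t ^ q) / 4 + (2*q) ^ ℓ * (s - t) ^ ℓ * (a + b) ^ ℓ := by
    have c1 : |a - b| ^ (ℓ - 1) * ((a + b) * (s ^ q - t ^ q)) / 2
        ≤ |a - b| ^ (ℓ - 1) * ((a + b) * (q * s ^ (q - 1) * (s - t))) / 2 := by
      have h1 : (a + b) * (s ^ q - t ^ q) ≤ (a + b) * (q * s ^ (q - 1) * (s - t)) :=
        mul_le_mul_of_nonneg_left hbern (by linarith)
      have h2 := mul_le_mul_of_nonneg_left h1 (Real.rpow_nonneg (abs_nonneg (a - b)) (ℓ - 1))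
      linarith
    have c2 : |a - b| ^ (ℓ - 1) * ((a + b) * (q * s ^ (q - 1) * (s - t))) / 2
        = (|a - b| ^ (ℓ - 1) * s ^ (q - 1)) * (q / 2 * ((a + b) * (s - t))) := by ring
    have c3 : |a - b| ^ ℓ * s ^ q / 4 ≤ |a - b| ^ ℓ * (s ^ q + t ^ q) / 4 := by
      nlinarith [Real.rpow_nonneg (abs_nonneg (a - b)) ℓ]
    rw [hBpow] at hyoung
    have c4 : (|a - b| ^ (ℓ - 1) * s ^ (q - 1)) ^ (ℓ / (ℓ - 1)) / 4 ≤ |a - b| ^ ℓ * s ^ q / 4 := by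
      linarith
    linarith [c1, hyoung, c4, c3, c2.le, c2.ge]
  have hid : |a - b| ^ (ℓ - 2) * (a - b) * (a * s ^ q - b * t ^ q)
      = (|a - b| ^ (ℓ - 2) * (a - b) ^ 2) * (s ^ q + t ^ q) / 2
        + (|a - b| ^ (ℓ - 2) * (a - b)) * ((a + b) * (s ^ q - t ^ q)) / 2 := by ring
  rw [ge_iff_le, hid, hu2, habs_st]
  have hterm : -(|a - b| ^ (ℓ - 1) * ((a + b) * (s ^ q - t ^ q)) / 2)
      ≤ (|a - b| ^ (ℓ - 2) * (a - b)) * ((a + b) * (s ^ q - t ^ q)) / 2 := by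
    have hY : 0 ≤ (a + b) * (s ^ q - t ^ q) := mul_nonneg (by linarith) (by linarith)
    nlinarith [hXlow, hY]
  linarith [hkey, hterm]

theorem stmt_10 (n : ℕ) (ℓ q : ℝ) (hℓ : 1 < ℓ) (hq : ℓ ≤ q) :
    ∃ c : ℝ, 0 < c ∧ ∀ w φ : EuclideanSpace ℝ (Fin n) → ℝ,
      (∀ x, 0 ≤ w x) → (∀ x, 0 ≤ φ x) → (∀ x, φ x ≤ 1) →
      ∀ x y,
        (fun τ : ℝ => |τ| ^ (ℓ - 2) * τ) (w x - w y) *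
            (w x * φ x ^ q - w y * φ y ^ q)
          ≥ |w x - w y| ^ ℓ * (φ x ^ q + φ y ^ q) / 4
            - c * |φ x - φ y| ^ ℓ * (w x + w y) ^ ℓ := by
  refine ⟨(2 * q) ^ ℓ, Real.rpow_pos_of_pos (by linarith) ℓ, ?_⟩
  intro w φ hw hφ0 hφ1 x y
  simp only []
  rcases le_total (φ y) (φ x) with h | h
  · exact key' ℓ q (w x) (w y) (φ x) (φ y) hℓ hq (hw x) (hw y) (hφ0 y) h (hφ1 x)
  · have h2 := key' ℓ q (w y) (w x) (φ y) (φ x) hℓ hq (hw y) (hw x) (hφ0 x) h (hφ1 y)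
    rw [abs_sub_comm (w y) (w x), abs_sub_comm (φ y) (φ x)] at h2
    have e1 : |w x - w y| ^ (ℓ - 2) * (w y - w x) * (w y * φ y ^ q - w x * φ x ^ q)
        = |w x - w y| ^ (ℓ - 2) * (w x - w y) * (w x * φ x ^ q - w y * φ y ^ q) := by ring
    have e2 : (w y + w x) ^ ℓ = (w x + w y) ^ ℓ := by rw [add_comm]
    rw [e1, e2] at h2
    linarith
end

section
/- Let s ∈ (0,1), p ≥ 1 with sp ≤ n, and let B_r ⊂ ℝⁿ be a ball. For any f ∈ W^{s,p}(B_r) with support of f contained in a measurable set of measure |supp f|, one has (1/|B_r|)∫_{B_r}|f/r^s|^p dx ≤ c·(|supp f|/|B_r|)^{sp/n} · (1/|B_r|)∫_{B_r}∫_{B_r} |f(x)−f(y)|^p/|x−y|^{n+sp} dxdy + c·|(f)_{B_r}/r^s|^p, where c depends only on n, s, p. -/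
open Real MeasureTheory Metric Set
open scoped ENNReal

private lemma ball_chain {E : Type*} [NormedAddCommGroup E] [NormedSpace ℝ E]
    {x₀ x : E} {r δ : ℝ} (hx : x ∈ Metric.ball x₀ r) (hδ0 : 0 < δ) (hδr : δ ≤ r) :
    ∃ z : E, Metric.ball z (δ / 2) ⊆ Metric.ball x δ ∩ Metric.ball x₀ r := by
  rw [Metric.mem_ball] at hx
  rcases le_or_gt (dist x x₀) (δ / 2) with h | h
  · refine ⟨x₀, fun y hy => ⟨?_, ?_⟩⟩
    · rw [Metric.mem_ball] at hy ⊢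
      calc dist y x ≤ dist y x₀ + dist x₀ x := dist_triangle _ _ _
        _ < δ / 2 + δ / 2 := by rw [dist_comm x₀ x]; linarith
        _ = δ := by ring
    · rw [Metric.mem_ball] at hy ⊢
      linarith
  · set d := dist x x₀ with hd
    have hd0 : 0 < d := lt_trans (by linarith) h
    set c : ℝ := δ / (2 * d) with hc
    have hc0 : 0 < c := by positivity
    have hc1 : c < 1 := by
      rw [hc, div_lt_one (by positivity)]; linarith
    set z : E := x₀ + (1 - c) • (x - x₀) with hz
    have hzx : dist z x = δ / 2 := by
      have h1 : z - x = -(c • (x - x₀)) := by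
        rw [hz, sub_smul, one_smul]; abel
      rw [dist_eq_norm, h1, norm_neg, norm_smul, Real.norm_eq_abs, abs_of_pos hc0,
        ← dist_eq_norm, ← hd, hc]
      field_simp
    have hzx₀ : dist z x₀ = d - δ / 2 := by
      have h1 : z - x₀ = (1 - c) • (x - x₀) := by rw [hz]; abel
      rw [dist_eq_norm, h1, norm_smul, Real.norm_eq_abs, abs_of_pos (by linarith),
        ← dist_eq_norm, ← hd, hc]
      field_simp
    refine ⟨z, fun y hy => ⟨?_, ?_⟩⟩
    · rw [Metric.mem_ball] at hy ⊢
      calc dist y x ≤ dist y z + dist z x := dist_triangle _ _ _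
        _ < δ / 2 + δ / 2 := by rw [hzx] at *; linarith
        _ = δ := by ring
    · rw [Metric.mem_ball] at hy ⊢
      calc dist y x₀ ≤ dist y z + dist z x₀ := dist_triangle _ _ _
        _ < δ / 2 + (d - δ / 2) := by rw [hzx₀] at *; linarith
        _ = d := by ring
        _ < r := hx

private lemma jensen_rpow {X : Type*} [MeasurableSpace X] (μ : Measure X)
    (hμ0 : μ Set.univ ≠ 0) (hμt : μ Set.univ ≠ ⊤) {p : ℝ} (hp : 1 ≤ p)
    {g : X → ℝ≥0∞} (hg : AEMeasurable g μ) :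
    ((μ Set.univ)⁻¹ * ∫⁻ x, g x ∂μ) ^ p ≤ (μ Set.univ)⁻¹ * ∫⁻ x, g x ^ p ∂μ := by
  rcases eq_or_lt_of_le hp with h1 | h1
  · simp [← h1]
  have hp0 : 0 < p := by linarith
  have hq : p.HolderConjugate (Real.conjExponent p) := Real.HolderConjugate.conjExponent h1
  set q := Real.conjExponent p with hqdef
  set U := μ Set.univ with hU
  set I := ∫⁻ x, g x ^ p ∂μ with hI
  have key : ∫⁻ x, g x ∂μ ≤ I ^ (1/p) * U ^ (1/q) := by
    have h := ENNReal.lintegral_mul_le_Lp_mul_Lq μ hq hg (aemeasurable_const (b := (1:ℝ≥0∞)))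
    simpa [ENNReal.one_rpow, lintegral_one] using h
  have hpq : p / q = p - 1 := hq.div_conj_eq_sub_one
  calc (U⁻¹ * ∫⁻ x, g x ∂μ) ^ p ≤ (U⁻¹ * (I ^ (1/p) * U ^ (1/q))) ^ p := by
        gcongr
    _ = (U⁻¹) ^ p * ((I ^ (1/p)) ^ p * (U ^ (1/q)) ^ p) := by
        rw [ENNReal.mul_rpow_of_nonneg _ _ hp0.le, ENNReal.mul_rpow_of_nonneg _ _ hp0.le]
    _ = (U ^ p)⁻¹ * (I * U ^ (p/q)) := by
        rw [ENNReal.inv_rpow, ← ENNReal.rpow_mul, ← ENNReal.rpow_mul,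
          one_div, inv_mul_cancel₀ hp0.ne', ENNReal.rpow_one, one_div, ← div_eq_inv_mul]
    _ = U⁻¹ * I := by
        rw [hpq, ← ENNReal.rpow_neg, mul_comm I, ← mul_assoc, ← ENNReal.rpow_add _ _ hμ0 hμt]
        have : -p + (p - 1) = -1 := by ring
        rw [this, ENNReal.rpow_neg_one]

private lemma ennreal_triangle_pow {u v w : ℝ} {p : ℝ} (hp : 1 ≤ p) (h : |u| ≤ |v| + |w|) :
    ENNReal.ofReal (|u| ^ p) ≤
      (2 : ℝ≥0∞) ^ (p - 1) * (ENNReal.ofReal (|v| ^ p) + ENNReal.ofReal (|w| ^ p)) := by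
  have hp0 : 0 < p := lt_of_lt_of_le one_pos hp
  have h2 : ENNReal.ofReal (|u| ^ p) ≤ (ENNReal.ofReal |v| + ENNReal.ofReal |w|) ^ p := by
    rw [← ENNReal.ofReal_add (abs_nonneg _) (abs_nonneg _),
      ENNReal.ofReal_rpow_of_nonneg (by positivity) hp0.le]
    exact ENNReal.ofReal_le_ofReal (Real.rpow_le_rpow (abs_nonneg _) h hp0.le)
  refine h2.trans ?_
  have h4 := ENNReal.rpow_add_le_mul_rpow_add_rpow (ENNReal.ofReal |v|) (ENNReal.ofReal |w|) hp
  rwa [ENNReal.ofReal_rpow_of_nonneg (abs_nonneg _) hp0.le,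
    ENNReal.ofReal_rpow_of_nonneg (abs_nonneg _) hp0.le] at h4

set_option maxHeartbeats 2000000 in
theorem stmt_19 (n : ℕ) (s p : ℝ) (hs : 0 < s) (hs1 : s < 1) (hp : 1 ≤ p)
    (hsp : s * p ≤ n) :
    ∃ c : ℝ, 0 < c ∧ ∀ (x₀ : EuclideanSpace ℝ (Fin n)) (r : ℝ), 0 < r →
      ∀ f : EuclideanSpace ℝ (Fin n) → ℝ, Measurable f →
        (volume (Metric.ball x₀ r))⁻¹ *
            ∫⁻ x in Metric.ball x₀ r, ENNReal.ofReal (|f x| ^ p / r ^ (s * p))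
          ≤ ENNReal.ofReal c *
              ((volume (Function.support f) / volume (Metric.ball x₀ r)) ^ (s * p / n) *
                ((volume (Metric.ball x₀ r))⁻¹ *
                  ∫⁻ x in Metric.ball x₀ r, ∫⁻ y in Metric.ball x₀ r,
                    ENNReal.ofReal (|f x - f y| ^ p / ‖x - y‖ ^ ((n : ℝ) + s * p))))
            + ENNReal.ofReal c *
              ENNReal.ofReal (|⨍ x in Metric.ball x₀ r, f x| ^ p / r ^ (s * p)) := by
  classical
  have hp0 : 0 < p := lt_of_lt_of_le one_pos hp
  have hsp0 : 0 < s * p := mul_pos hs hp0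
  have hn : 0 < (n : ℝ) := lt_of_lt_of_le hsp0 hsp
  have hn0 : (n : ℝ) ≠ 0 := hn.ne'
  set θ : ℝ := s * p / n with hθ
  have hθ0 : 0 < θ := div_pos hsp0 hn
  have hθ1 : θ ≤ 1 := (div_le_one hn).2 hsp
  set α : ℝ := (n : ℝ) + s * p with hα
  have hα0 : 0 < α := by positivity
  set ω : ℝ≥0∞ := volume (Metric.ball (0 : EuclideanSpace ℝ (Fin n)) 1) with hω
  have hω0 : ω ≠ 0 := (Metric.measure_ball_pos volume 0 one_pos).ne'
  have hωt : ω ≠ ⊤ := measure_ball_lt_top.ne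
  set ωr : ℝ := ω.toReal with hωr
  have hωr0 : 0 < ωr := ENNReal.toReal_pos hω0 hωt
  set εr : ℝ := (2 : ℝ)⁻¹ ^ (n + 1) with hεr
  have hεr0 : 0 < εr := by positivity
  set C₁ : ℝ := 2 ^ α * (2 / ωr) ^ (1 + θ) with hC₁
  have hC₁0 : 0 < C₁ := by positivity
  set c₁ : ℝ := C₁ * ωr ^ θ with hc₁
  set c₂ : ℝ := 2 ^ (p - 1) * (2 ^ α / ωr) / εr ^ θ with hc₂
  set c₃ : ℝ := 2 ^ (p - 1) with hc₃
  have hc₁0 : 0 < c₁ := by positivity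
  have hc₂0 : 0 < c₂ := by positivity
  have hc₃0 : 0 < c₃ := by positivity
  refine ⟨c₁ + c₂ + c₃, by positivity, ?_⟩
  intro x₀ r hr f hf
  set B := Metric.ball x₀ r with hB
  set V := volume B with hV
  set T := volume (Function.support f) with hT
  set M : ℝ := ⨍ x in B, f x with hM
  set IG := ∫⁻ x in B, ∫⁻ y in B, ENNReal.ofReal (|f x - f y| ^ p / ‖x - y‖ ^ α) with hIG
  have hV0 : V ≠ 0 := (Metric.measure_ball_pos volume x₀ hr).ne'
  have hVt : V ≠ ⊤ := measure_ball_lt_top.ne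
  haveI : IsFiniteMeasure (volume.restrict B) :=
    ⟨by rw [Measure.restrict_apply_univ]; exact hVt.lt_top⟩
  have hVball : V = ENNReal.ofReal (r ^ n) * ω := by
    rw [hV, hB, Measure.addHaar_ball_of_pos volume x₀ hr, finrank_euclideanSpace_fin]
  have hVr : V = ENNReal.ofReal (ωr * r ^ n) := by
    rw [hVball, ← ENNReal.ofReal_toReal hωt, ← hωr,
      ← ENNReal.ofReal_mul (by positivity), mul_comm]
  have hVtr : V.toReal = ωr * r ^ n := by
    rw [hVr, ENNReal.toReal_ofReal (by positivity)]
  -- measurability helpers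
  have hrpowp : Measurable fun t : ℝ => t ^ p := (Real.continuous_rpow_const hp0.le).measurable
  have hrpowα : Measurable fun t : ℝ => t ^ α := (Real.continuous_rpow_const hα0.le).measurable
  have hfm : Measurable fun x => ENNReal.ofReal (|f x| ^ p) :=
    (hrpowp.comp hf.abs).ennreal_ofReal
  have hGp : Measurable (fun q : EuclideanSpace ℝ (Fin n) × EuclideanSpace ℝ (Fin n) =>
      ENNReal.ofReal (|f q.1 - f q.2| ^ p / ‖q.1 - q.2‖ ^ α)) := by
    apply Measurable.ennreal_ofReal
    exact (hrpowp.comp ((hf.comp measurable_fst).sub (hf.comp measurable_snd)).abs).div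
      (hrpowα.comp (measurable_fst.sub measurable_snd).norm)
  have hGy : ∀ x, Measurable fun y => ENNReal.ofReal (|f x - f y| ^ p / ‖x - y‖ ^ α) := by
    intro x
    apply Measurable.ennreal_ofReal
    exact (hrpowp.comp (measurable_const.sub hf).abs).div
      (hrpowα.comp (measurable_const.sub measurable_id).norm)
  have hGI : Measurable fun x => ∫⁻ y in B, ENNReal.ofReal (|f x - f y| ^ p / ‖x - y‖ ^ α) :=
    hGp.lintegral_prod_right'
  have hDp : Measurable (fun q : EuclideanSpace ℝ (Fin n) × EuclideanSpace ℝ (Fin n) =>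
      ENNReal.ofReal (|f q.1 - f q.2| ^ p)) :=
    (hrpowp.comp ((hf.comp measurable_fst).sub (hf.comp measurable_snd)).abs).ennreal_ofReal
  have hDI : Measurable fun x => ∫⁻ y in B, ENNReal.ofReal (|f x - f y| ^ p) :=
    hDp.lintegral_prod_right'
  set L := ∫⁻ x in B, ENNReal.ofReal (|f x| ^ p) with hL
  have hrsp : 0 < r ^ (s * p) := Real.rpow_pos_of_pos hr _
  set R := ENNReal.ofReal (r ^ (s * p)) with hR
  have hR0 : R ≠ 0 := by
    rw [hR]; exact (ENNReal.ofReal_pos.2 hrsp).ne'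
  have hRt : R ≠ ⊤ := ENNReal.ofReal_ne_top
  have hLHS : (∫⁻ x in B, ENNReal.ofReal (|f x| ^ p / r ^ (s * p))) = L * R⁻¹ := by
    rw [hL, ← lintegral_mul_const' R⁻¹ _ (ENNReal.inv_ne_top.2 hR0)]
    congr 1; funext x
    rw [ENNReal.ofReal_div_of_pos hrsp, div_eq_mul_inv]
  have hEs : MeasurableSet (Function.support f) := by
    have : Function.support f = f ⁻¹' ({0}ᶜ) := by
      ext x; simp [Function.mem_support]
    rw [this]; exact hf (measurableSet_singleton 0).compl
  set A := volume (Function.support f ∩ B) with hA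
  have hAT : A ≤ T := measure_mono Set.inter_subset_left
  have hAV : A ≤ V := measure_mono Set.inter_subset_right
  have hAt : A ≠ ⊤ := (lt_of_le_of_lt hAV hVt.lt_top).ne
  rw [hLHS]
  by_cases hcase : A ≤ ENNReal.ofReal εr * V
  · -- CASE 1 : small support
    by_cases hA0 : A = 0
    · -- f = 0 a.e. on B
      have hL0 : L = 0 := by
        rw [hL, lintegral_eq_zero_iff hfm]
        have hsub : {x | ¬ (ENNReal.ofReal (|f x| ^ p) = 0)} ⊆ Function.support f := by
          intro x hx
          rw [Function.mem_support]
          intro h0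
          exact hx (by rw [h0, abs_zero, Real.zero_rpow hp0.ne', ENNReal.ofReal_zero])
        have hnull : (volume.restrict B) (Function.support f) = 0 := by
          rw [Measure.restrict_apply hEs]; exact hA0
        have : (volume.restrict B) {x | ¬ (ENNReal.ofReal (|f x| ^ p) = 0)} = 0 :=
          measure_mono_null hsub hnull
        filter_upwards [(ae_iff).2 this] with x hx
        exact hx
      rw [hL0, zero_mul, mul_zero]
      exact zero_le
    · -- capacity estimate
      set a := A.toReal with ha
      have ha0 : 0 < a := ENNReal.toReal_pos hA0 hAt
      have hAa : A = ENNReal.ofReal a := (ENNReal.ofReal_toReal hAt).symm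
      set δ : ℝ := 2 * (2 * a / ωr) ^ (n : ℝ)⁻¹ with hδ
      have hδ0 : 0 < δ := by positivity
      have haV : a ≤ εr * (ωr * r ^ n) := by
        have h1 : (ENNReal.ofReal εr * V).toReal = εr * (ωr * r ^ n) := by
          rw [ENNReal.toReal_mul, ENNReal.toReal_ofReal hεr0.le, hVtr]
        have h2 := ENNReal.toReal_mono
          (ENNReal.mul_ne_top ENNReal.ofReal_ne_top hVt) hcase
        rwa [h1] at h2
      have h2a : 2 * a / ωr ≤ (r / 2) ^ n := by
        have hεrval : 2 * εr = (2 : ℝ)⁻¹ ^ n := by rw [hεr, pow_succ]; ring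
        have : (r / 2) ^ n = (2:ℝ)⁻¹ ^ n * r ^ n := by
          rw [div_pow, inv_pow]; ring
        rw [this, ← hεrval]
        rw [div_le_iff₀ hωr0]
        calc 2 * a ≤ 2 * (εr * (ωr * r ^ n)) := by linarith
          _ = 2 * εr * r ^ n * ωr := by ring
      have hδr : δ ≤ r := by
        have h1 : (2 * a / ωr) ^ (n:ℝ)⁻¹ ≤ ((r/2)^n) ^ (n:ℝ)⁻¹ :=
          Real.rpow_le_rpow (by positivity) h2a (by positivity)
        have h2 : (((r/2):ℝ)^n) ^ (n:ℝ)⁻¹ = r/2 := by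
          rw [← Real.rpow_natCast (r/2) n, ← Real.rpow_mul (by positivity),
            mul_inv_cancel₀ hn0, Real.rpow_one]
        rw [hδ]
        calc 2 * (2 * a / ωr) ^ (n:ℝ)⁻¹ ≤ 2 * (r/2) := by
              have := h1.trans_eq h2; linarith
          _ = r := by ring
      have hδhalf : ((δ/2):ℝ) ^ n = 2*a/ωr := by
        have : δ/2 = (2 * a / ωr) ^ (n:ℝ)⁻¹ := by rw [hδ]; ring
        rw [this, ← Real.rpow_natCast _ n, ← Real.rpow_mul (by positivity),
          inv_mul_cancel₀ hn0, Real.rpow_one]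
      -- pointwise capacity bound
      have hpoint : ∀ x ∈ B, ENNReal.ofReal (|f x| ^ p) * A ≤
          ENNReal.ofReal (δ ^ α) *
            ∫⁻ y in B, ENNReal.ofReal (|f x - f y| ^ p / ‖x - y‖ ^ α) := by
        intro x hx
        by_cases hfx : f x = 0
        · simp [hfx, Real.zero_rpow hp0.ne']
        obtain ⟨z, hz⟩ := ball_chain hx hδ0 hδr
        set S := (Metric.ball x δ ∩ B) \ Function.support f with hS
        have hSB : S ⊆ B := fun y hy => hy.1.2
        have hSvol : A ≤ volume S := by
          have h1 : volume (Metric.ball x δ ∩ B) ≤ volume S + A := by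
            calc volume (Metric.ball x δ ∩ B)
                = volume (S ∪ ((Metric.ball x δ ∩ B) ∩ Function.support f)) := by
                  rw [hS, Set.diff_union_inter]
              _ ≤ volume S + volume ((Metric.ball x δ ∩ B) ∩ Function.support f) :=
                  measure_union_le _ _
              _ ≤ volume S + A := by
                  gcongr
                  exact measure_mono (fun y hy => ⟨hy.2, hy.1.2⟩)
          have h2 : A + A ≤ volume (Metric.ball x δ ∩ B) := by
            have hball : volume (Metric.ball z (δ/2)) = ENNReal.ofReal ((δ/2)^n) * ω := by
              rw [Measure.addHaar_ball_of_pos volume z (by positivity),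
                finrank_euclideanSpace_fin]
            calc A + A = ENNReal.ofReal ((δ/2)^n) * ω := by
                  rw [hδhalf, hAa, ← ENNReal.ofReal_add ha0.le ha0.le,
                    ← ENNReal.ofReal_toReal hωt, ← hωr,
                    ← ENNReal.ofReal_mul (by positivity)]
                  congr 1
                  field_simp
                  ring
              _ = volume (Metric.ball z (δ/2)) := hball.symm
              _ ≤ volume (Metric.ball x δ ∩ B) := measure_mono hz
          have := le_trans h2 h1
          rwa [ENNReal.add_le_add_iff_right hAt] at this
        have hfxp : 0 < |f x| ^ p := Real.rpow_pos_of_pos (abs_pos.2 hfx) p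
        have hδα : 0 < δ ^ α := Real.rpow_pos_of_pos hδ0 _
        have hKey : ∀ y ∈ S, ENNReal.ofReal (|f x| ^ p / δ ^ α) ≤
            ENNReal.ofReal (|f x - f y| ^ p / ‖x - y‖ ^ α) := by
          intro y hy
          have hfy : f y = 0 := Function.notMem_support.1 hy.2
          have hxy0 : x ≠ y := by
            rintro rfl; exact hy.2 (Function.mem_support.2 hfx)
          have hnorm0 : 0 < ‖x - y‖ := by
            rw [norm_pos_iff]; exact sub_ne_zero.2 hxy0
          have hnormδ : ‖x - y‖ ≤ δ := by
            have h' : dist y x < δ := Metric.mem_ball.1 hy.1.1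
            rw [← dist_eq_norm, dist_comm]; linarith
          apply ENNReal.ofReal_le_ofReal
          rw [hfy, sub_zero]
          have h1 : ‖x-y‖ ^ α ≤ δ ^ α := Real.rpow_le_rpow (norm_nonneg _) hnormδ hα0.le
          have h2 : 0 < ‖x-y‖ ^ α := Real.rpow_pos_of_pos hnorm0 _
          gcongr
        have hIS : ENNReal.ofReal (|f x| ^ p / δ ^ α) * A ≤
            ∫⁻ y in B, ENNReal.ofReal (|f x - f y| ^ p / ‖x - y‖ ^ α) := by
          calc ENNReal.ofReal (|f x| ^ p / δ ^ α) * A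
              ≤ ENNReal.ofReal (|f x| ^ p / δ ^ α) * volume S := mul_le_mul_right hSvol _
            _ = ∫⁻ _ in S, ENNReal.ofReal (|f x| ^ p / δ ^ α) := (setLIntegral_const _ _).symm
            _ ≤ ∫⁻ y in S, ENNReal.ofReal (|f x - f y| ^ p / ‖x - y‖ ^ α) :=
                setLIntegral_mono (hGy x) hKey
            _ ≤ ∫⁻ y in B, ENNReal.ofReal (|f x - f y| ^ p / ‖x - y‖ ^ α) :=
                lintegral_mono_set hSB
        calc ENNReal.ofReal (|f x| ^ p) * A
            = ENNReal.ofReal (δ ^ α) * (ENNReal.ofReal (|f x| ^ p / δ ^ α) * A) := by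
              rw [← mul_assoc, ← ENNReal.ofReal_mul hδα.le]
              congr 2
              field_simp
          _ ≤ ENNReal.ofReal (δ ^ α) * _ := mul_le_mul_right hIS _
      have hmain : L * A ≤ ENNReal.ofReal (δ ^ α) * IG := by
        calc L * A = ∫⁻ x in B, ENNReal.ofReal (|f x| ^ p) * A :=
              (lintegral_mul_const' A _ hAt).symm
          _ ≤ ∫⁻ x in B, ENNReal.ofReal (δ ^ α) *
                ∫⁻ y in B, ENNReal.ofReal (|f x - f y| ^ p / ‖x - y‖ ^ α) :=
              setLIntegral_mono (measurable_const.mul hGI) hpoint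
          _ = ENNReal.ofReal (δ ^ α) * IG := lintegral_const_mul' _ _ ENNReal.ofReal_ne_top
      have hLbound : L ≤ ENNReal.ofReal (δ ^ α) * IG / A :=
        (ENNReal.le_div_iff_mul_le (Or.inl hA0) (Or.inl hAt)).2 hmain
      have hδα2 : ENNReal.ofReal (δ ^ α) / A = ENNReal.ofReal C₁ * A ^ θ := by
        have hna : (n:ℝ)⁻¹ * α = 1 + θ := by
          rw [hα, hθ]; field_simp
        have hreal : δ ^ α = C₁ * (a ^ θ * a) := by
          rw [hδ, Real.mul_rpow (by norm_num) (by positivity),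
            ← Real.rpow_mul (by positivity : (0:ℝ) ≤ 2 * a / ωr), hna]
          have h2aω : 2 * a / ωr = 2 / ωr * a := by ring
          rw [h2aω, Real.mul_rpow (by positivity) ha0.le,
            Real.rpow_add ha0 1 θ, Real.rpow_one, hC₁]
          ring
        have h1 : ENNReal.ofReal (δ ^ α) = ENNReal.ofReal C₁ * A ^ θ * A := by
          rw [hreal, ENNReal.ofReal_mul hC₁0.le,
            ENNReal.ofReal_mul (by positivity : (0:ℝ) ≤ a ^ θ),
            ← ENNReal.ofReal_rpow_of_pos ha0, ← hAa, ← mul_assoc]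
        rw [h1, mul_div_assoc, ENNReal.div_self hA0 hAt, mul_one]
      have hL2 : L ≤ ENNReal.ofReal C₁ * A ^ θ * IG := by
        refine hLbound.trans (le_of_eq ?_)
        rw [div_eq_mul_inv, mul_right_comm, ← div_eq_mul_inv, hδα2]
      have hVθ : V ^ θ = R * ENNReal.ofReal (ωr ^ θ) := by
        have hreal : (ωr * r ^ n) ^ θ = r ^ (s*p) * ωr ^ θ := by
          rw [Real.mul_rpow hωr0.le (by positivity),
            ← Real.rpow_natCast r n, ← Real.rpow_mul hr.le]
          have : (n:ℝ) * θ = s * p := by rw [hθ]; field_simp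
          rw [this]; ring
        rw [hVr, ENNReal.ofReal_rpow_of_pos (by positivity), hreal,
          ENNReal.ofReal_mul (by positivity), hR]
      have hAθle : A ^ θ ≤ (T/V) ^ θ * (R * ENNReal.ofReal (ωr ^ θ)) := by
        calc A ^ θ ≤ T ^ θ := ENNReal.rpow_le_rpow hAT hθ0.le
          _ = ((T/V) * V) ^ θ := by rw [ENNReal.div_mul_cancel hV0 hVt]
          _ = (T/V) ^ θ * V ^ θ := ENNReal.mul_rpow_of_nonneg _ _ hθ0.le
          _ = (T/V) ^ θ * (R * ENNReal.ofReal (ωr ^ θ)) := by rw [hVθ]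
      refine le_add_right ?_
      calc V⁻¹ * (L * R⁻¹)
          ≤ V⁻¹ * ((ENNReal.ofReal C₁ * A ^ θ * IG) * R⁻¹) := by gcongr
        _ = (ENNReal.ofReal C₁ * A ^ θ * R⁻¹) * (V⁻¹ * IG) := by ring
        _ ≤ (ENNReal.ofReal C₁ * ((T/V) ^ θ * (R * ENNReal.ofReal (ωr ^ θ))) * R⁻¹) *
              (V⁻¹ * IG) := by gcongr
        _ = (ENNReal.ofReal C₁ * ENNReal.ofReal (ωr ^ θ)) * (T/V) ^ θ * (R * R⁻¹) *
              (V⁻¹ * IG) := by ring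
        _ = ENNReal.ofReal c₁ * ((T/V) ^ θ * (V⁻¹ * IG)) := by
            rw [ENNReal.mul_inv_cancel hR0 hRt, mul_one,
              ← ENNReal.ofReal_mul hC₁0.le, ← hc₁]
            ring
        _ ≤ ENNReal.ofReal (c₁ + c₂ + c₃) * ((T/V) ^ θ * (V⁻¹ * IG)) :=
            mul_le_mul_left (ENNReal.ofReal_le_ofReal (by linarith)) _
  · -- CASE 2 : large support
    have hεV : ENNReal.ofReal εr * V < A := not_le.1 hcase
    have hTV : ENNReal.ofReal εr ≤ T / V := by
      rw [ENNReal.le_div_iff_mul_le (Or.inl hV0) (Or.inl hVt)]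
      exact le_trans hεV.le hAT
    have hTVθ : ENNReal.ofReal (εr ^ θ) ≤ (T/V) ^ θ := by
      rw [← ENNReal.ofReal_rpow_of_pos hεr0]
      exact ENNReal.rpow_le_rpow hTV hθ0.le
    have hTVθ0 : (T/V) ^ θ ≠ 0 :=
      (lt_of_lt_of_le (ENNReal.ofReal_pos.2 (Real.rpow_pos_of_pos hεr0 θ)) hTVθ).ne'
    by_cases hIGt : IG = ⊤
    · have hRHS1 : ENNReal.ofReal (c₁ + c₂ + c₃) * ((T/V) ^ θ * (V⁻¹ * IG)) = ⊤ := by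
        rw [hIGt, ENNReal.mul_top (ENNReal.inv_ne_zero.2 hVt),
          ENNReal.mul_top hTVθ0,
          ENNReal.mul_top (ENNReal.ofReal_pos.2 (by linarith)).ne']
      rw [hRHS1, top_add]
      exact le_top
    -- IG finite
    have h2t : ((2:ℝ≥0∞) ^ (p-1)) ≠ ⊤ :=
      ENNReal.rpow_ne_top_of_nonneg (by linarith) (by norm_num)
    have hpw : ∀ x ∈ B, ∀ y ∈ B, ENNReal.ofReal (|f x - f y| ^ p) ≤
        ENNReal.ofReal ((2*r) ^ α) *
          ENNReal.ofReal (|f x - f y| ^ p / ‖x - y‖ ^ α) := by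
      intro x hx y hy
      by_cases hxy : x = y
      · subst hxy
        simp [Real.zero_rpow hp0.ne']
      · have h0 : 0 < ‖x - y‖ := by rw [norm_pos_iff]; exact sub_ne_zero.2 hxy
        have h2r : ‖x - y‖ ≤ 2 * r := by
          have hx' := Metric.mem_ball.1 hx
          have hy' := Metric.mem_ball.1 hy
          rw [← dist_eq_norm]
          calc dist x y ≤ dist x x₀ + dist y x₀ := dist_triangle_right _ _ _
            _ ≤ 2 * r := by linarith
        rw [← ENNReal.ofReal_mul (by positivity)]
        apply ENNReal.ofReal_le_ofReal
        have hD : ‖x - y‖ ^ α ≤ (2*r) ^ α := Real.rpow_le_rpow (norm_nonneg _) h2r hα0.le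
        have hD0 : 0 < ‖x - y‖ ^ α := Real.rpow_pos_of_pos h0 _
        have h2rα : 0 < (2*r) ^ α := Real.rpow_pos_of_pos (by linarith) _
        calc |f x - f y| ^ p = (2*r) ^ α * (|f x - f y| ^ p / (2*r) ^ α) := by
              field_simp
          _ ≤ (2*r) ^ α * (|f x - f y| ^ p / ‖x - y‖ ^ α) := by gcongr
    have hLt : L ≠ ⊤ := by
      intro hLtop
      have hxinf : ∀ x, (∫⁻ y in B, ENNReal.ofReal (|f x - f y| ^ p)) = ⊤ := by
        intro x
        by_contra hfin
        have hbd : ∀ y, ENNReal.ofReal (|f y| ^ p) ≤ (2:ℝ≥0∞) ^ (p-1) *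
            (ENNReal.ofReal (|f x - f y| ^ p) + ENNReal.ofReal (|f x| ^ p)) := by
          intro y
          refine ennreal_triangle_pow hp ?_
          have h1 : |f y| - |f x| ≤ |f y - f x| := abs_sub_abs_le_abs_sub _ _
          rw [abs_sub_comm] at h1
          linarith [abs_nonneg (f x)]
        have hchain : L ≤ (2:ℝ≥0∞) ^ (p-1) *
            ((∫⁻ y in B, ENNReal.ofReal (|f x - f y| ^ p)) +
              ENNReal.ofReal (|f x| ^ p) * V) := by
          calc L ≤ ∫⁻ y in B, (2:ℝ≥0∞) ^ (p-1) *
                (ENNReal.ofReal (|f x - f y| ^ p) + ENNReal.ofReal (|f x| ^ p)) :=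
              lintegral_mono fun y => hbd y
            _ = (2:ℝ≥0∞) ^ (p-1) * (∫⁻ y in B,
                (ENNReal.ofReal (|f x - f y| ^ p) + ENNReal.ofReal (|f x| ^ p))) :=
              lintegral_const_mul' _ _ h2t
            _ = (2:ℝ≥0∞) ^ (p-1) *
                ((∫⁻ y in B, ENNReal.ofReal (|f x - f y| ^ p)) +
                  ENNReal.ofReal (|f x| ^ p) * V) := by
              rw [lintegral_add_right _ measurable_const, setLIntegral_const]
        have hne : (2:ℝ≥0∞) ^ (p-1) *
            ((∫⁻ y in B, ENNReal.ofReal (|f x - f y| ^ p)) +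
              ENNReal.ofReal (|f x| ^ p) * V) ≠ ⊤ :=
          ENNReal.mul_ne_top h2t (ENNReal.add_ne_top.2
            ⟨hfin, ENNReal.mul_ne_top ENNReal.ofReal_ne_top hVt⟩)
        rw [hLtop] at hchain
        exact hne (top_le_iff.1 hchain)
      have hGinf : ∀ x ∈ B,
          (∫⁻ y in B, ENNReal.ofReal (|f x - f y| ^ p / ‖x - y‖ ^ α)) = ⊤ := by
        intro x hx
        have h1 : (∫⁻ y in B, ENNReal.ofReal (|f x - f y| ^ p)) ≤
            ENNReal.ofReal ((2*r) ^ α) *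
              ∫⁻ y in B, ENNReal.ofReal (|f x - f y| ^ p / ‖x - y‖ ^ α) := by
          calc (∫⁻ y in B, ENNReal.ofReal (|f x - f y| ^ p))
              ≤ ∫⁻ y in B, ENNReal.ofReal ((2*r) ^ α) *
                  ENNReal.ofReal (|f x - f y| ^ p / ‖x - y‖ ^ α) :=
              setLIntegral_mono (measurable_const.mul (hGy x)) (fun y hy => hpw x hx y hy)
            _ = ENNReal.ofReal ((2*r) ^ α) *
                  ∫⁻ y in B, ENNReal.ofReal (|f x - f y| ^ p / ‖x - y‖ ^ α) :=
              lintegral_const_mul' _ _ ENNReal.ofReal_ne_top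
        rw [hxinf x] at h1
        by_contra hGfin
        exact (ENNReal.mul_ne_top ENNReal.ofReal_ne_top hGfin) (top_le_iff.1 h1)
      have : IG = ⊤ := by
        have heq : ∫⁻ x in B, (∫⁻ y in B,
            ENNReal.ofReal (|f x - f y| ^ p / ‖x - y‖ ^ α)) =
            ∫⁻ _x in B, (⊤:ℝ≥0∞) := by
          apply setLIntegral_congr_fun measurableSet_ball
          exact fun x hx => hGinf x hx
        rw [hIG, heq, setLIntegral_const, ENNReal.top_mul hV0]
      exact hIGt this
    -- f is integrable on B
    have hint : Integrable f (volume.restrict B) := by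
      constructor
      · exact hf.aestronglyMeasurable
      · rw [hasFiniteIntegral_iff_norm]
        have hptw : ∀ x : EuclideanSpace ℝ (Fin n),
            ENNReal.ofReal ‖f x‖ ≤ 1 + ENNReal.ofReal (|f x| ^ p) := by
          intro x
          rw [Real.norm_eq_abs]
          rcases le_or_gt (|f x|) 1 with h | h
          · calc ENNReal.ofReal |f x| ≤ 1 := by
                  simpa using ENNReal.ofReal_le_ofReal h
              _ ≤ 1 + ENNReal.ofReal (|f x| ^ p) := le_self_add
          · calc ENNReal.ofReal |f x| ≤ ENNReal.ofReal (|f x| ^ p) := by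
                  apply ENNReal.ofReal_le_ofReal
                  calc |f x| = |f x| ^ (1:ℝ) := (Real.rpow_one _).symm
                    _ ≤ |f x| ^ p := Real.rpow_le_rpow_of_exponent_le h.le hp
              _ ≤ 1 + ENNReal.ofReal (|f x| ^ p) := le_add_self
        calc ∫⁻ x in B, ENNReal.ofReal ‖f x‖
            ≤ ∫⁻ x in B, (1 + ENNReal.ofReal (|f x| ^ p)) := lintegral_mono hptw
          _ = V + L := by
              rw [lintegral_add_left measurable_const, setLIntegral_const, one_mul]
          _ < ⊤ := ENNReal.add_lt_top.2 ⟨hVt.lt_top, hLt.lt_top⟩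
    have hVr0' : 0 < V.toReal := ENNReal.toReal_pos hV0 hVt
    -- mean value bound
    have havg : ∀ x, |f x - M| ≤ (V.toReal)⁻¹ * ∫ y in B, |f x - f y| := by
      intro x
      have h1 : M = (V.toReal)⁻¹ * ∫ y in B, f y := by
        rw [hM, setAverage_eq, smul_eq_mul, measureReal_def, ← hV]
      have h2 : (∫ y in B, (f x - f y)) = V.toReal * f x - ∫ y in B, f y := by
        rw [integral_sub (integrable_const (f x)) hint, setIntegral_const, smul_eq_mul, measureReal_def, ← hV]
      have h3 : f x - M = (V.toReal)⁻¹ * ∫ y in B, (f x - f y) := by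
        rw [h2, h1, mul_sub, ← mul_assoc, inv_mul_cancel₀ hVr0'.ne', one_mul]
      rw [h3, abs_mul, abs_of_pos (inv_pos.2 hVr0')]
      have h4 : |∫ y in B, (f x - f y)| ≤ ∫ y in B, |f x - f y| := by
        simpa [Real.norm_eq_abs] using
          norm_integral_le_integral_norm (μ := volume.restrict B) (fun y => f x - f y)
      exact mul_le_mul_of_nonneg_left h4 (inv_nonneg.2 hVr0'.le)
    have havg2 : ∀ x, ENNReal.ofReal (|f x - M| ^ p) ≤
        V⁻¹ * ∫⁻ y in B, ENNReal.ofReal (|f x - f y| ^ p) := by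
      intro x
      have hIabs : Integrable (fun y => |f x - f y|) (volume.restrict B) :=
        ((integrable_const (f x)).sub hint).abs
      have h0 : ENNReal.ofReal (∫ y in B, |f x - f y|) =
          ∫⁻ y in B, ENNReal.ofReal |f x - f y| :=
        ofReal_integral_eq_lintegral_ofReal hIabs
          (Filter.Eventually.of_forall fun y => abs_nonneg _)
      have hVinv : V⁻¹ = ENNReal.ofReal ((V.toReal)⁻¹) := by
        rw [ENNReal.ofReal_inv_of_pos hVr0', ENNReal.ofReal_toReal hVt]
      have h1 : ENNReal.ofReal |f x - M| ≤
          V⁻¹ * ∫⁻ y in B, ENNReal.ofReal |f x - f y| := by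
        rw [← h0, hVinv, ← ENNReal.ofReal_mul (by positivity)]
        exact ENNReal.ofReal_le_ofReal (havg x)
      have hjen := jensen_rpow (volume.restrict B)
        (by rwa [Measure.restrict_apply_univ]) (by rwa [Measure.restrict_apply_univ]) hp
        (g := fun y => ENNReal.ofReal |f x - f y|)
        ((measurable_const.sub hf).abs.ennreal_ofReal.aemeasurable)
      rw [Measure.restrict_apply_univ] at hjen
      calc ENNReal.ofReal (|f x - M| ^ p)
          = (ENNReal.ofReal |f x - M|) ^ p :=
            (ENNReal.ofReal_rpow_of_nonneg (abs_nonneg _) hp0.le).symm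
        _ ≤ (V⁻¹ * ∫⁻ y in B, ENNReal.ofReal |f x - f y|) ^ p :=
            ENNReal.rpow_le_rpow h1 hp0.le
        _ ≤ V⁻¹ * ∫⁻ y in B, (ENNReal.ofReal |f x - f y|) ^ p := hjen
        _ = V⁻¹ * ∫⁻ y in B, ENNReal.ofReal (|f x - f y| ^ p) := by
            congr 1
            apply lintegral_congr
            intro y
            exact ENNReal.ofReal_rpow_of_nonneg (abs_nonneg _) hp0.le
    -- main chain
    set J := ∫⁻ x in B, ∫⁻ y in B, ENNReal.ofReal (|f x - f y| ^ p) with hJdef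
    have hL2 : L ≤ (2:ℝ≥0∞) ^ (p-1) * ((V⁻¹ * J) + ENNReal.ofReal (|M| ^ p) * V) := by
      have hsplit : ∀ x : EuclideanSpace ℝ (Fin n), ENNReal.ofReal (|f x| ^ p) ≤
          (2:ℝ≥0∞) ^ (p-1) *
            (ENNReal.ofReal (|f x - M| ^ p) + ENNReal.ofReal (|M| ^ p)) := by
        intro x
        refine ennreal_triangle_pow hp ?_
        have h1 : |f x| - |M| ≤ |f x - M| := abs_sub_abs_le_abs_sub _ _
        linarith [abs_nonneg M]
      calc L ≤ ∫⁻ x in B, (2:ℝ≥0∞) ^ (p-1) *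
            (ENNReal.ofReal (|f x - M| ^ p) + ENNReal.ofReal (|M| ^ p)) :=
          lintegral_mono fun x => hsplit x
        _ = (2:ℝ≥0∞) ^ (p-1) * (∫⁻ x in B,
            (ENNReal.ofReal (|f x - M| ^ p) + ENNReal.ofReal (|M| ^ p))) :=
          lintegral_const_mul' _ _ h2t
        _ = (2:ℝ≥0∞) ^ (p-1) *
            ((∫⁻ x in B, ENNReal.ofReal (|f x - M| ^ p)) + ENNReal.ofReal (|M| ^ p) * V) := by
          rw [lintegral_add_right _ measurable_const, setLIntegral_const]
        _ ≤ (2:ℝ≥0∞) ^ (p-1) * ((V⁻¹ * J) + ENNReal.ofReal (|M| ^ p) * V) := by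
          refine mul_le_mul_right (add_le_add_left ?_ _) _
          calc (∫⁻ x in B, ENNReal.ofReal (|f x - M| ^ p))
              ≤ ∫⁻ x in B, V⁻¹ * ∫⁻ y in B, ENNReal.ofReal (|f x - f y| ^ p) :=
              lintegral_mono fun x => havg2 x
            _ = V⁻¹ * J := lintegral_const_mul' _ _ (ENNReal.inv_ne_top.2 hV0)
    have hJ : J ≤ ENNReal.ofReal ((2*r) ^ α) * IG := by
      calc J ≤ ∫⁻ x in B, ∫⁻ y in B, ENNReal.ofReal ((2*r) ^ α) *
            ENNReal.ofReal (|f x - f y| ^ p / ‖x - y‖ ^ α) := by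
            refine setLIntegral_mono ((measurable_const.mul hGp).lintegral_prod_right') ?_
            intro x hx
            exact setLIntegral_mono (measurable_const.mul (hGy x)) (fun y hy => hpw x hx y hy)
        _ = ENNReal.ofReal ((2*r) ^ α) * IG := by
          rw [hIG, ← lintegral_const_mul' (ENNReal.ofReal ((2*r) ^ α)) _
            ENNReal.ofReal_ne_top]
          apply lintegral_congr
          intro x
          exact lintegral_const_mul' _ _ ENNReal.ofReal_ne_top
    have hL3 : L ≤ (2:ℝ≥0∞) ^ (p-1) *
        ((V⁻¹ * (ENNReal.ofReal ((2*r) ^ α) * IG)) + ENNReal.ofReal (|M| ^ p) * V) := by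
      refine hL2.trans ?_
      gcongr
    have hconst : V⁻¹ * (R⁻¹ * ENNReal.ofReal ((2*r) ^ α)) =
        ENNReal.ofReal (2 ^ α / ωr) := by
      have hrα : r ^ α = r ^ (n:ℕ) * r ^ (s*p) := by
        rw [hα, Real.rpow_add hr, Real.rpow_natCast]
      have hreal2 : (2*r) ^ α = (2 ^ α * r ^ n) * r ^ (s*p) := by
        rw [Real.mul_rpow (by norm_num) hr.le, hrα]
        ring
      have h1 : ENNReal.ofReal ((2*r) ^ α) = ENNReal.ofReal (2 ^ α * r ^ n) * R := by
        rw [hreal2, ENNReal.ofReal_mul (by positivity), hR]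
      have hfact : ENNReal.ofReal (2 ^ α * r ^ n) = ENNReal.ofReal (2 ^ α / ωr) * V := by
        rw [hVr, ← ENNReal.ofReal_mul (by positivity)]
        congr 1
        field_simp
      calc V⁻¹ * (R⁻¹ * ENNReal.ofReal ((2*r) ^ α))
          = V⁻¹ * (ENNReal.ofReal (2 ^ α * r ^ n) * (R⁻¹ * R)) := by rw [h1]; ring
        _ = V⁻¹ * (ENNReal.ofReal (2 ^ α / ωr) * V) := by
            rw [ENNReal.inv_mul_cancel hR0 hRt, mul_one, hfact]
        _ = ENNReal.ofReal (2 ^ α / ωr) * (V⁻¹ * V) := by ring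
        _ = ENNReal.ofReal (2 ^ α / ωr) := by
            rw [ENNReal.inv_mul_cancel hV0 hVt, mul_one]
    have h2e : (2:ℝ≥0∞) ^ (p-1) = ENNReal.ofReal (2 ^ (p-1)) := by
      rw [← ENNReal.ofReal_rpow_of_pos (by norm_num : (0:ℝ) < 2)]
      norm_num
    have hεθ : εr ^ θ ≠ 0 := (Real.rpow_pos_of_pos hεr0 θ).ne'
    calc V⁻¹ * (L * R⁻¹)
        ≤ V⁻¹ * (((2:ℝ≥0∞) ^ (p-1) *
            ((V⁻¹ * (ENNReal.ofReal ((2*r) ^ α) * IG)) + ENNReal.ofReal (|M| ^ p) * V)) *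
              R⁻¹) := by gcongr
      _ = (2:ℝ≥0∞) ^ (p-1) * (V⁻¹ * (R⁻¹ * ENNReal.ofReal ((2*r) ^ α))) * (V⁻¹ * IG)
          + (2:ℝ≥0∞) ^ (p-1) * (ENNReal.ofReal (|M| ^ p) * R⁻¹) * (V⁻¹ * V) := by ring
      _ = (2:ℝ≥0∞) ^ (p-1) * ENNReal.ofReal (2 ^ α / ωr) * (V⁻¹ * IG)
          + (2:ℝ≥0∞) ^ (p-1) * (ENNReal.ofReal (|M| ^ p) * R⁻¹) := by
          rw [hconst, ENNReal.inv_mul_cancel hV0 hVt, mul_one]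
      _ ≤ ENNReal.ofReal (c₁+c₂+c₃) * ((T/V) ^ θ * (V⁻¹ * IG))
          + ENNReal.ofReal (c₁+c₂+c₃) *
              ENNReal.ofReal (|M| ^ p / r ^ (s*p)) := by
          refine add_le_add ?_ ?_
          · have hkey : (2:ℝ≥0∞) ^ (p-1) * ENNReal.ofReal (2 ^ α / ωr) ≤
                ENNReal.ofReal (c₁+c₂+c₃) * (T/V) ^ θ := by
              calc (2:ℝ≥0∞) ^ (p-1) * ENNReal.ofReal (2 ^ α / ωr)
                  = ENNReal.ofReal (c₂ * εr ^ θ) := by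
                    rw [h2e, ← ENNReal.ofReal_mul (by positivity)]
                    congr 1
                    rw [hc₂, hc₃]
                    field_simp
                _ = ENNReal.ofReal c₂ * ENNReal.ofReal (εr ^ θ) :=
                    ENNReal.ofReal_mul hc₂0.le
                _ ≤ ENNReal.ofReal (c₁+c₂+c₃) * (T/V) ^ θ :=
                    mul_le_mul' (ENNReal.ofReal_le_ofReal (by linarith)) hTVθ
            calc (2:ℝ≥0∞) ^ (p-1) * ENNReal.ofReal (2 ^ α / ωr) * (V⁻¹ * IG)
                ≤ (ENNReal.ofReal (c₁+c₂+c₃) * (T/V) ^ θ) * (V⁻¹ * IG) :=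
                  mul_le_mul_left hkey _
              _ = ENNReal.ofReal (c₁+c₂+c₃) * ((T/V) ^ θ * (V⁻¹ * IG)) := by ring
          · have hMR : ENNReal.ofReal (|M| ^ p) * R⁻¹ =
                ENNReal.ofReal (|M| ^ p / r ^ (s*p)) := by
              rw [ENNReal.ofReal_div_of_pos hrsp, div_eq_mul_inv, hR]
            rw [hMR]
            exact mul_le_mul_left (le_trans (le_of_eq h2e)
              (ENNReal.ofReal_le_ofReal (by linarith))) _
end
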